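/- Let N ≥ 1 and let x^0 ∈ ℝ^m be fixed. Suppose q is a family of strictly positive transition densities on ℝ^m such that the conditional density of the chain factors as q(x^{1:N} | x^0) = ∏_{j=1}^N q(x^j | x^{j-1}), and suppose p is a family of strictly positive densities factoring as p(x^{0:N}) = p(x^N) ∏_{j=1}^N p(x^{j-1} | x^j), where x^{j:N} denotes (x^j, …, x^N). Define the posterior density q(x^j | x^{j+1}, x^0) := q(x^{j+1} | x^j) q(x^j | x^0) / q(x^{j+1} | x^0), where q(x^j | x^0) denotes the j-step marginal density of the chain started at x^0. Then the marginal density p(x^0) = ∫ p(x^{0:N}) dx^{1:N} satisfies the evidence lower bound ln p(x^0) ≥ E_{x^{1:N} ∼ q(· | x^0)} [ ln( p(x^N) / q(x^N | x^0) ) + ln p(x^0 | x^1) + Σ_{j=1}^{N-1} ln( p(x^j | x^{j+1}) / q(x^j | x^{j+1}, x^0) ) ]. -/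

import Mathlib

open MeasureTheory

/-- The `j`-step marginal density of the Markov chain with transition density `q`
(`q x' x` is the density of the next state at `x'` given current state `x`),
`kstepMarginal q j x x0 = q(x^j = x | x^0 = x0)`, obtained by integrating the product of
transitions over the intermediate states (written here via the Chapman–Kolmogorov
recursion, which agrees with the iterated integral of the product by Tonelli/Fubini). -/
noncomputable def kstepMarginal {m' : ℕ}
    (q : (Fin m' → ℝ) → (Fin m' → ℝ) → ℝ) :
    ℕ → (Fin m' → ℝ) → (Fin m' → ℝ) → ℝ
  | 0, _, _ => 0
  | 1, x, x0 => q x x0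
  | (j + 2), x, x0 => ∫ y, q x y * kstepMarginal q (j + 1) y x0

/-- The trajectory `x^0, x^1, …, x^N` determined by the initial point `x0 = x^0` and the
path `xs = x^{1:N}`: `traj x0 xs j = x^j` for `0 ≤ j ≤ N` (and junk `x0` beyond `N`). -/
def traj {m' N : ℕ} (x0 : Fin m' → ℝ) (xs : Fin N → (Fin m' → ℝ)) (j : ℕ) :
    Fin m' → ℝ :=
  if h : 1 ≤ j ∧ j ≤ N then xs ⟨j - 1, by omega⟩ else x0

private lemma traj_zero {m' N : ℕ} (x0 : Fin m' → ℝ) (xs : Fin N → (Fin m' → ℝ)) :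
    traj x0 xs 0 = x0 := by simp [traj]

private lemma traj_meas {m' N : ℕ} (x0 : Fin m' → ℝ) (j : ℕ) :
    Measurable fun xs : Fin N → (Fin m' → ℝ) => traj x0 xs j := by
  by_cases h : 1 ≤ j ∧ j ≤ N
  · simp only [traj, dif_pos h]
    exact measurable_pi_apply _
  · simp only [traj, dif_neg h]
    exact measurable_const

private lemma traj_snoc_le {m' N : ℕ} (x0 y : Fin m' → ℝ) (ys : Fin N → (Fin m' → ℝ))
    {j : ℕ} (hj : j ≤ N) :
    traj x0 (Fin.snoc ys y) j = traj x0 ys j := by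
  unfold traj
  by_cases h : 1 ≤ j ∧ j ≤ N
  · rw [dif_pos ⟨h.1, by omega⟩, dif_pos h]
    have he : (⟨j - 1, by omega⟩ : Fin (N + 1)) =
        Fin.castSucc (⟨j - 1, by omega⟩ : Fin N) := rfl
    rw [he, Fin.snoc_castSucc]
  · rw [dif_neg (by omega), dif_neg h]

private lemma traj_snoc_top {m' N : ℕ} (x0 y : Fin m' → ℝ) (ys : Fin N → (Fin m' → ℝ)) :
    traj x0 (Fin.snoc ys y) (N + 1) = y := by
  unfold traj
  rw [dif_pos ⟨by omega, le_refl _⟩]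
  have he : (⟨N + 1 - 1, by omega⟩ : Fin (N + 1)) = Fin.last N := rfl
  rw [he, Fin.snoc_last]

private lemma lintegral_q_one {m' : ℕ} {q : (Fin m' → ℝ) → (Fin m' → ℝ) → ℝ}
    (hqmeas : Measurable (Function.uncurry q))
    (hqpos : ∀ a b, 0 < q a b) (hqint : ∀ b, ∫ a, q a b = 1) (b : Fin m' → ℝ) :
    ∫⁻ a, ENNReal.ofReal (q a b) = 1 := by
  have hm : Measurable fun a => q a b :=
    hqmeas.comp (measurable_id.prodMk measurable_const)
  have hint : Integrable fun a => q a b := by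
    by_contra h
    have := hqint b
    rw [integral_undef h] at this
    exact zero_ne_one this
  rw [← ofReal_integral_eq_lintegral_ofReal hint (ae_of_all _ fun a => (hqpos a b).le),
    hqint b, ENNReal.ofReal_one]

private lemma lintegral_chain {m' : ℕ} {q : (Fin m' → ℝ) → (Fin m' → ℝ) → ℝ}
    (hqmeas : Measurable (Function.uncurry q))
    (hqpos : ∀ a b, 0 < q a b) (hqint : ∀ b, ∫ a, q a b = 1) :
    ∀ N, 1 ≤ N → ∀ x0 : Fin m' → ℝ,
      ∫⁻ xs : Fin N → (Fin m' → ℝ),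
        ∏ j ∈ Finset.Icc 1 N, ENNReal.ofReal (q (traj x0 xs j) (traj x0 xs (j - 1))) = 1 := by
  have hterm : ∀ (N : ℕ) (x0 : Fin m' → ℝ) (j : ℕ),
      Measurable fun xs : Fin N → (Fin m' → ℝ) =>
        ENNReal.ofReal (q (traj x0 xs j) (traj x0 xs (j - 1))) := fun N x0 j =>
    (hqmeas.comp ((traj_meas x0 j).prodMk (traj_meas x0 (j - 1)))).ennreal_ofReal
  intro N hN
  induction N, hN using Nat.le_induction with
  | base =>
    intro x0
    simp only [Finset.Icc_self, Finset.prod_singleton]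
    have hpres := volume_preserving_funUnique (Fin 1) (Fin m' → ℝ)
    have hg : Measurable fun y : Fin m' → ℝ => ENNReal.ofReal (q y x0) :=
      (hqmeas.comp (measurable_id.prodMk measurable_const)).ennreal_ofReal
    have hc := hpres.lintegral_comp hg
    have heq : ∀ xs : Fin 1 → (Fin m' → ℝ),
        ENNReal.ofReal (q (traj x0 xs 1) (traj x0 xs (1 - 1))) =
          ENNReal.ofReal (q (MeasurableEquiv.funUnique (Fin 1) (Fin m' → ℝ) xs) x0) := by
      intro xs
      have h1 : traj x0 xs 1 = xs ⟨0, by omega⟩ := by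
        rw [traj, dif_pos ⟨le_refl _, le_refl _⟩]
      have h2 : (MeasurableEquiv.funUnique (Fin 1) (Fin m' → ℝ)) xs = xs ⟨0, by omega⟩ := by
        rfl
      rw [show (1 : ℕ) - 1 = 0 from rfl, traj_zero, h1, h2]
    rw [lintegral_congr heq]
    exact hc.trans (lintegral_q_one hqmeas hqpos hqint x0)
  | succ n hn ih =>
    intro x0
    set e : (Fin (n + 1) → (Fin m' → ℝ)) ≃ᵐ (Fin m' → ℝ) × (Fin n → (Fin m' → ℝ)) :=
      MeasurableEquiv.piFinSuccAbove (fun _ => (Fin m' → ℝ)) (Fin.last n) with he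
    have hpres : MeasurePreserving e.symm
        ((volume : Measure (Fin m' → ℝ)).prod (volume : Measure (Fin n → (Fin m' → ℝ)))) volume :=
      (volume_preserving_piFinSuccAbove (fun _ : Fin (n + 1) => (Fin m' → ℝ)) (Fin.last n)).symm e
    have hFmeas : Measurable fun xs : Fin (n + 1) → (Fin m' → ℝ) =>
        ∏ j ∈ Finset.Icc 1 (n + 1), ENNReal.ofReal (q (traj x0 xs j) (traj x0 xs (j - 1))) :=
      Finset.measurable_prod _ fun j _ => hterm (n + 1) x0 j
    rw [← hpres.lintegral_comp hFmeas]
    have hsymm : ∀ p : (Fin m' → ℝ) × (Fin n → (Fin m' → ℝ)), e.symm p = Fin.snoc p.2 p.1 := by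
      intro p
      simp only [he, MeasurableEquiv.piFinSuccAbove_symm_apply, Fin.insertNthEquiv_last,
        Fin.snocEquiv_apply]
      rfl
    have hm2 : Measurable fun p : (Fin m' → ℝ) × (Fin n → (Fin m' → ℝ)) =>
        ∏ j ∈ Finset.Icc 1 (n + 1),
          ENNReal.ofReal (q (traj x0 (e.symm p) j) (traj x0 (e.symm p) (j - 1))) :=
      hFmeas.comp e.symm.measurable
    rw [lintegral_prod_symm _ hm2.aemeasurable]
    have hinner : ∀ ys : Fin n → (Fin m' → ℝ),
        (∫⁻ y, ∏ j ∈ Finset.Icc 1 (n + 1),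
          ENNReal.ofReal (q (traj x0 (e.symm (y, ys)) j) (traj x0 (e.symm (y, ys)) (j - 1)))) =
        ∏ j ∈ Finset.Icc 1 n, ENNReal.ofReal (q (traj x0 ys j) (traj x0 ys (j - 1))) := by
      intro ys
      have hsplit : ∀ y : (Fin m' → ℝ),
          (∏ j ∈ Finset.Icc 1 (n + 1),
            ENNReal.ofReal (q (traj x0 (e.symm (y, ys)) j) (traj x0 (e.symm (y, ys)) (j - 1)))) =
          (∏ j ∈ Finset.Icc 1 n, ENNReal.ofReal (q (traj x0 ys j) (traj x0 ys (j - 1)))) *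
            ENNReal.ofReal (q y (traj x0 ys n)) := by
        intro y
        rw [hsymm (y, ys), Finset.prod_Icc_succ_top (by omega : 1 ≤ n + 1)]
        congr 1
        · refine Finset.prod_congr rfl fun j hj => ?_
          obtain ⟨hj1, hj2⟩ := Finset.mem_Icc.1 hj
          rw [traj_snoc_le x0 y ys hj2, traj_snoc_le x0 y ys (by omega : j - 1 ≤ n)]
        · rw [traj_snoc_top, show n + 1 - 1 = n from rfl, traj_snoc_le x0 y ys (le_refl n)]
      simp only [hsplit]
      have hm3 : Measurable fun y : Fin m' → ℝ => ENNReal.ofReal (q y (traj x0 ys n)) :=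
        (hqmeas.comp (measurable_id.prodMk measurable_const)).ennreal_ofReal
      rw [lintegral_const_mul _ hm3, lintegral_q_one hqmeas hqpos hqint, mul_one]
    rw [lintegral_congr hinner]
    exact ih x0


private lemma tele_sum (N : ℕ) (hN : 1 ≤ N) (A B C : ℕ → ℝ) (h1 : C 1 = B 1) :
    A 1 - C N + ∑ j ∈ Finset.Icc 1 (N - 1), (A (j + 1) - (B (j + 1) + C j - C (j + 1))) =
      ∑ j ∈ Finset.Icc 1 N, A j - ∑ j ∈ Finset.Icc 1 N, B j := by
  induction N, hN using Nat.le_induction with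
  | base => simp [h1]
  | succ n hn ih =>
    obtain ⟨k, rfl⟩ : ∃ k, n = k + 1 := ⟨n - 1, by omega⟩
    simp only [Nat.add_sub_cancel] at ih ⊢
    rw [Finset.sum_Icc_succ_top (by omega : 1 ≤ k + 1),
      Finset.sum_Icc_succ_top (by omega : 1 ≤ k + 2) A,
      Finset.sum_Icc_succ_top (by omega : 1 ≤ k + 2) B]
    linarith [ih]

private lemma log_quot {x y z w : ℝ} (hx : 0 < x) (hy : 0 < y) (hz : 0 < z) (hw : 0 < w) :
    Real.log (x / (y * z / w)) = Real.log x - (Real.log y + Real.log z - Real.log w) := by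
  rw [Real.log_div hx.ne' (by positivity), Real.log_div (by positivity) hw.ne',
    Real.log_mul hy.ne' hz.ne']


private lemma jensen_elbo {Ω : Type*} [MeasureSpace Ω] {P Q : Ω → ℝ}
    (hPpos : ∀ x, 0 < P x) (hQpos : ∀ x, 0 < Q x)
    (hPInt : Integrable P) (hQInt : Integrable Q) (hQ1 : ∫ x, Q x = 1)
    (hInt : Integrable fun x => Q x * Real.log (P x / Q x)) :
    ∫ x, Q x * Real.log (P x / Q x) ≤ Real.log (∫ x, P x) := by
  have hμ : (volume : Measure Ω) ≠ 0 := by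
    intro h0
    rw [h0, integral_zero_measure] at hQ1
    exact zero_ne_one hQ1
  have hc : 0 < ∫ x, P x := by
    refine (integral_pos_iff_support_of_nonneg (fun x => (hPpos x).le) hPInt).2 ?_
    have hs : Function.support P = Set.univ := Set.eq_univ_of_forall fun x => (hPpos x).ne'
    rw [hs]
    exact MeasureTheory.Measure.measure_univ_pos.2 hμ
  set c := ∫ x, P x with hcdef
  have hsplit : (fun x => Q x * Real.log (P x / (c * Q x))) =
      fun x => Q x * Real.log (P x / Q x) - Real.log c * Q x := by
    funext x
    rw [Real.log_div (hPpos x).ne' (mul_pos hc (hQpos x)).ne', Real.log_mul hc.ne' (hQpos x).ne',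
      Real.log_div (hPpos x).ne' (hQpos x).ne']
    ring
  have hIntL : Integrable fun x => Q x * Real.log (P x / (c * Q x)) := by
    rw [hsplit]
    exact hInt.sub (hQInt.const_mul _)
  have hIntR : Integrable fun x => P x / c - Q x := (hPInt.div_const c).sub hQInt
  have hpt : ∀ x, Q x * Real.log (P x / (c * Q x)) ≤ P x / c - Q x := by
    intro x
    have ht : 0 < P x / (c * Q x) := div_pos (hPpos x) (mul_pos hc (hQpos x))
    have h1 := Real.log_le_sub_one_of_pos ht
    have h2 : Q x * Real.log (P x / (c * Q x)) ≤ Q x * (P x / (c * Q x) - 1) :=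
      mul_le_mul_of_nonneg_left h1 (hQpos x).le
    have h3 : Q x * (P x / (c * Q x) - 1) = P x / c - Q x := by
      have hc' : c ≠ 0 := hc.ne'
      have hq' : Q x ≠ 0 := (hQpos x).ne'
      field_simp
    linarith
  have hmono := integral_mono hIntL hIntR hpt
  rw [integral_sub (hPInt.div_const c) hQInt, integral_div, ← hcdef, div_self hc.ne',
    hQ1] at hmono
  rw [hsplit, integral_sub hInt (hQInt.const_mul _), integral_const_mul, hQ1, mul_one] at hmono
  linarith


/-- Evidence lower bound: for strictly positive transition densities `q`
and a strictly positive reverse model `p(x^{0:N}) = p(x^N) ∏_{j=1}^N p(x^{j-1}|x^j)`,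
the log marginal `ln p(x^0) = ln ∫ p(x^{0:N}) dx^{1:N}` is at least the expectation, under
`x^{1:N} ∼ q(·|x^0) = ∏_{j=1}^N q(x^j|x^{j-1})`, of
`ln(p(x^N)/q(x^N|x^0)) + ln p(x^0|x^1) + ∑_{j=1}^{N-1} ln(p(x^j|x^{j+1})/q(x^j|x^{j+1},x^0))`,
where `q(x^j|x^{j+1},x^0) = q(x^{j+1}|x^j) q(x^j|x^0) / q(x^{j+1}|x^0)`. -/
theorem diffusion_elbo {m' N : ℕ} (hN : 1 ≤ N) (x0 : Fin m' → ℝ)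
    (q : (Fin m' → ℝ) → (Fin m' → ℝ) → ℝ)
    (pN : (Fin m' → ℝ) → ℝ)
    (pcond : ℕ → (Fin m' → ℝ) → (Fin m' → ℝ) → ℝ)
    -- measurability
    (hqmeas : Measurable (Function.uncurry q))
    (hpNmeas : Measurable pN)
    (hpcondmeas : ∀ j, Measurable (Function.uncurry (pcond j)))
    -- strict positivity of all densities
    (hqpos : ∀ a b, 0 < q a b)
    (hpNpos : ∀ a, 0 < pN a)
    (hpcondpos : ∀ j a b, 0 < pcond j a b)
    (hmargpos : ∀ j, 1 ≤ j → ∀ a, 0 < kstepMarginal q j a x0)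
    -- each density integrates to 1 in its first argument
    (hqint : ∀ b, ∫ a, q a b = 1)
    (hpNint : ∫ a, pN a = 1)
    (hpcondint : ∀ j b, ∫ a, pcond j a b = 1)
    -- finiteness of the expectations involved
    (hPInt : Integrable (fun xs : Fin N → (Fin m' → ℝ) =>
      pN (traj x0 xs N) *
        ∏ j ∈ Finset.Icc 1 N, pcond j (traj x0 xs (j - 1)) (traj x0 xs j)))
    (hElboInt : Integrable (fun xs : Fin N → (Fin m' → ℝ) =>
      (∏ j ∈ Finset.Icc 1 N, q (traj x0 xs j) (traj x0 xs (j - 1))) *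
        (Real.log (pN (traj x0 xs N) / kstepMarginal q N (traj x0 xs N) x0) +
          Real.log (pcond 1 x0 (traj x0 xs 1)) +
          ∑ j ∈ Finset.Icc 1 (N - 1),
            Real.log (pcond (j + 1) (traj x0 xs j) (traj x0 xs (j + 1)) /
              (q (traj x0 xs (j + 1)) (traj x0 xs j) *
                  kstepMarginal q j (traj x0 xs j) x0 /
                kstepMarginal q (j + 1) (traj x0 xs (j + 1)) x0))))) :
    Real.log (∫ xs : Fin N → (Fin m' → ℝ),
        pN (traj x0 xs N) *
          ∏ j ∈ Finset.Icc 1 N, pcond j (traj x0 xs (j - 1)) (traj x0 xs j)) ≥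
      ∫ xs : Fin N → (Fin m' → ℝ),
        (∏ j ∈ Finset.Icc 1 N, q (traj x0 xs j) (traj x0 xs (j - 1))) *
          (Real.log (pN (traj x0 xs N) / kstepMarginal q N (traj x0 xs N) x0) +
            Real.log (pcond 1 x0 (traj x0 xs 1)) +
            ∑ j ∈ Finset.Icc 1 (N - 1),
              Real.log (pcond (j + 1) (traj x0 xs j) (traj x0 xs (j + 1)) /
                (q (traj x0 xs (j + 1)) (traj x0 xs j) *
                    kstepMarginal q j (traj x0 xs j) x0 /
                  kstepMarginal q (j + 1) (traj x0 xs (j + 1)) x0))) := by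
    classical
  have hPpos : ∀ xs : Fin N → (Fin m' → ℝ),
      0 < pN (traj x0 xs N) *
        ∏ j ∈ Finset.Icc 1 N, pcond j (traj x0 xs (j - 1)) (traj x0 xs j) :=
    fun xs => mul_pos (hpNpos _) (Finset.prod_pos fun j _ => hpcondpos _ _ _)
  have hQpos : ∀ xs : Fin N → (Fin m' → ℝ),
      0 < ∏ j ∈ Finset.Icc 1 N, q (traj x0 xs j) (traj x0 xs (j - 1)) :=
    fun xs => Finset.prod_pos fun j _ => hqpos _ _
  -- the pointwise telescoping identity
  have hbr : ∀ xs : Fin N → (Fin m' → ℝ),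
      Real.log (pN (traj x0 xs N) / kstepMarginal q N (traj x0 xs N) x0) +
          Real.log (pcond 1 x0 (traj x0 xs 1)) +
          ∑ j ∈ Finset.Icc 1 (N - 1),
            Real.log (pcond (j + 1) (traj x0 xs j) (traj x0 xs (j + 1)) /
              (q (traj x0 xs (j + 1)) (traj x0 xs j) *
                  kstepMarginal q j (traj x0 xs j) x0 /
                kstepMarginal q (j + 1) (traj x0 xs (j + 1)) x0)) =
        Real.log ((pN (traj x0 xs N) *
            ∏ j ∈ Finset.Icc 1 N, pcond j (traj x0 xs (j - 1)) (traj x0 xs j)) /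
          ∏ j ∈ Finset.Icc 1 N, q (traj x0 xs j) (traj x0 xs (j - 1))) := by
    intro xs
    have h1 : Real.log (kstepMarginal q 1 (traj x0 xs 1) x0) =
        Real.log (q (traj x0 xs 1) (traj x0 xs (1 - 1))) := by
      rw [show (1 : ℕ) - 1 = 0 from rfl, traj_zero]
      simp [kstepMarginal]
    have key := tele_sum N hN
      (fun j => Real.log (pcond j (traj x0 xs (j - 1)) (traj x0 xs j)))
      (fun j => Real.log (q (traj x0 xs j) (traj x0 xs (j - 1))))
      (fun j => Real.log (kstepMarginal q j (traj x0 xs j) x0)) h1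
    rw [show (1 : ℕ) - 1 = 0 from rfl] at key
    have hsum : ∑ j ∈ Finset.Icc 1 (N - 1),
        Real.log (pcond (j + 1) (traj x0 xs j) (traj x0 xs (j + 1)) /
          (q (traj x0 xs (j + 1)) (traj x0 xs j) * kstepMarginal q j (traj x0 xs j) x0 /
            kstepMarginal q (j + 1) (traj x0 xs (j + 1)) x0)) =
        ∑ j ∈ Finset.Icc 1 (N - 1),
          (Real.log (pcond (j + 1) (traj x0 xs (j + 1 - 1)) (traj x0 xs (j + 1))) -
            (Real.log (q (traj x0 xs (j + 1)) (traj x0 xs (j + 1 - 1))) +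
              Real.log (kstepMarginal q j (traj x0 xs j) x0) -
              Real.log (kstepMarginal q (j + 1) (traj x0 xs (j + 1)) x0))) := by
      refine Finset.sum_congr rfl fun j hj => ?_
      obtain ⟨hj1, hj2⟩ := Finset.mem_Icc.1 hj
      rw [show j + 1 - 1 = j from rfl]
      exact log_quot (hpcondpos _ _ _) (hqpos _ _) (hmargpos j hj1 _)
        (hmargpos (j + 1) (by omega) _)
    have hx0 : pcond 1 x0 (traj x0 xs 1) = pcond 1 (traj x0 xs 0) (traj x0 xs 1) := by
      rw [traj_zero]
    rw [hsum, hx0, Real.log_div (hpNpos _).ne' (hmargpos N hN _).ne',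
      Real.log_div (hPpos xs).ne' (hQpos xs).ne',
      Real.log_mul (hpNpos _).ne' (Finset.prod_pos fun j _ => hpcondpos _ _ _).ne',
      Real.log_prod (fun j _ => (hpcondpos _ _ _).ne'),
      Real.log_prod (fun j _ => (hqpos _ _).ne')]
    linarith [key]
  -- measurability and integrability of the forward density
  have hQmeas : Measurable fun xs : Fin N → (Fin m' → ℝ) =>
      ∏ j ∈ Finset.Icc 1 N, q (traj x0 xs j) (traj x0 xs (j - 1)) :=
    Finset.measurable_prod _ fun j _ =>
      hqmeas.comp ((traj_meas x0 j).prodMk (traj_meas x0 (j - 1)))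
  have hQlint : ∫⁻ xs : Fin N → (Fin m' → ℝ),
      ENNReal.ofReal (∏ j ∈ Finset.Icc 1 N, q (traj x0 xs j) (traj x0 xs (j - 1))) = 1 := by
    rw [← lintegral_chain hqmeas hqpos hqint N hN x0]
    exact lintegral_congr fun xs =>
      ENNReal.ofReal_prod_of_nonneg fun j _ => (hqpos _ _).le
  have hQInt : Integrable fun xs : Fin N → (Fin m' → ℝ) =>
      ∏ j ∈ Finset.Icc 1 N, q (traj x0 xs j) (traj x0 xs (j - 1)) := by
    refine ⟨hQmeas.aestronglyMeasurable, ?_⟩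
    rw [hasFiniteIntegral_iff_ofReal (ae_of_all _ fun xs => (hQpos xs).le), hQlint]
    exact ENNReal.one_lt_top
  have hQ1 : ∫ xs : Fin N → (Fin m' → ℝ),
      ∏ j ∈ Finset.Icc 1 N, q (traj x0 xs j) (traj x0 xs (j - 1)) = 1 := by
    rw [integral_eq_lintegral_of_nonneg_ae (ae_of_all _ fun xs => (hQpos xs).le)
      hQmeas.aestronglyMeasurable, hQlint, ENNReal.toReal_one]
  -- transfer the integrability hypothesis along the pointwise identity
  have hElbo' : Integrable fun xs : Fin N → (Fin m' → ℝ) =>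
      (∏ j ∈ Finset.Icc 1 N, q (traj x0 xs j) (traj x0 xs (j - 1))) *
        Real.log ((pN (traj x0 xs N) *
            ∏ j ∈ Finset.Icc 1 N, pcond j (traj x0 xs (j - 1)) (traj x0 xs j)) /
          ∏ j ∈ Finset.Icc 1 N, q (traj x0 xs j) (traj x0 xs (j - 1))) :=
    hElboInt.congr (ae_of_all _ fun xs =>
      congrArg (fun t => (∏ j ∈ Finset.Icc 1 N, q (traj x0 xs j) (traj x0 xs (j - 1))) * t)
        (hbr xs))
  have final := jensen_elbo hPpos hQpos hPInt hQInt hQ1 hElbo'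
  have hgoal : ∫ xs : Fin N → (Fin m' → ℝ),
      (∏ j ∈ Finset.Icc 1 N, q (traj x0 xs j) (traj x0 xs (j - 1))) *
        (Real.log (pN (traj x0 xs N) / kstepMarginal q N (traj x0 xs N) x0) +
          Real.log (pcond 1 x0 (traj x0 xs 1)) +
          ∑ j ∈ Finset.Icc 1 (N - 1),
            Real.log (pcond (j + 1) (traj x0 xs j) (traj x0 xs (j + 1)) /
              (q (traj x0 xs (j + 1)) (traj x0 xs j) *
                  kstepMarginal q j (traj x0 xs j) x0 /
                kstepMarginal q (j + 1) (traj x0 xs (j + 1)) x0))) =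
      ∫ xs : Fin N → (Fin m' → ℝ),
        (∏ j ∈ Finset.Icc 1 N, q (traj x0 xs j) (traj x0 xs (j - 1))) *
          Real.log ((pN (traj x0 xs N) *
              ∏ j ∈ Finset.Icc 1 N, pcond j (traj x0 xs (j - 1)) (traj x0 xs j)) /
            ∏ j ∈ Finset.Icc 1 N, q (traj x0 xs j) (traj x0 xs (j - 1))) :=
    integral_congr_ae (ae_of_all _ fun xs =>
      congrArg (fun t => (∏ j ∈ Finset.Icc 1 N, q (traj x0 xs j) (traj x0 xs (j - 1))) * t)
        (hbr xs))
  rw [ge_iff_le, hgoal]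
  exact final
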